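/- The point G₁ = (-20740, 497760) is a rational point on the elliptic curve y² = x³ + 61644x² + 836402720x, and G₁ has infinite order in the group of rational points of this curve. -/

import Mathlib

/-- The elliptic curve `y² = x³ + 61644x² + 836402720x` over `ℚ`. -/
noncomputable def specializedCurve6 : WeierstrassCurve.Affine ℚ :=
  { a₁ := 0, a₂ := 61644, a₃ := 0, a₄ := 836402720, a₆ := 0 }

namespace Spec6Aux

open WeierstrassCurve.Affine WeierstrassCurve Polynomial

lemma eqn_iff (x y : ℚ) : specializedCurve6.Equation x y ↔
    y ^ 2 = x ^ 3 + 61644 * x ^ 2 + 836402720 * x := by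
  rw [WeierstrassCurve.Affine.equation_iff]
  show y ^ 2 + 0 * x * y + 0 * y = x ^ 3 + 61644 * x ^ 2 + 836402720 * x + 0 ↔ _
  constructor <;> intro h <;> linarith

lemma negY_eq (x y : ℚ) : specializedCurve6.negY x y = -y := by
  show -y - 0 * x - 0 = -y
  ring

lemma y_eq_zero {y : ℚ} (h : specializedCurve6.Equation 0 y) : y = 0 := by
  rw [eqn_iff] at h
  have : y ^ 2 = 0 := by linarith [sq_nonneg y]
  exact pow_eq_zero_iff (by norm_num) |>.mp this

/-- Vieta's formulas for the addition of two affine points. -/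
lemma vieta {x₁ y₁ x₂ y₂ : ℚ} (h₁ : specializedCurve6.Equation x₁ y₁)
    (h₂ : specializedCurve6.Equation x₂ y₂)
    (hxy : x₁ = x₂ → y₁ ≠ specializedCurve6.negY x₂ y₂) :
    (x₁ * x₂ + x₁ * (specializedCurve6.addX x₁ x₂ (specializedCurve6.slope x₁ x₂ y₁ y₂))
        + x₂ * (specializedCurve6.addX x₁ x₂ (specializedCurve6.slope x₁ x₂ y₁ y₂)) =
      2 * x₁ * (specializedCurve6.slope x₁ x₂ y₁ y₂) ^ 2
        - 2 * y₁ * (specializedCurve6.slope x₁ x₂ y₁ y₂) + 836402720) ∧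
    (x₁ * x₂ * (specializedCurve6.addX x₁ x₂ (specializedCurve6.slope x₁ x₂ y₁ y₂)) =
      (y₁ - (specializedCurve6.slope x₁ x₂ y₁ y₂) * x₁) ^ 2) := by
  set L := specializedCurve6.slope x₁ x₂ y₁ y₂ with hL
  set x₃ := specializedCurve6.addX x₁ x₂ L with hx₃
  have HH := WeierstrassCurve.Affine.addPolynomial_slope h₁ h₂ (fun h => hxy h.1 h.2)
  rw [WeierstrassCurve.Affine.addPolynomial_eq, Cubic.prod_X_sub_C_eq] at HH
  have HH2 := (Cubic.toPoly_injective _ _).mp (neg_inj.mp HH)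
  have hc := congrArg Cubic.c HH2
  have hd := congrArg Cubic.d HH2
  simp only at hc hd
  have ha1 : specializedCurve6.a₁ = 0 := rfl
  have ha3 : specializedCurve6.a₃ = 0 := rfl
  have ha4 : specializedCurve6.a₄ = 836402720 := rfl
  have ha6 : specializedCurve6.a₆ = 0 := rfl
  simp only [ha1, ha3, ha4, ha6] at hc hd
  constructor
  · linear_combination -hc
  · linear_combination hd

def gv (p : ℕ) (x : ℚ) : ZMod 2 :=
  if x = 0 then ((padicValRat p 836402720 : ℤ) : ZMod 2)
  else ((padicValRat p x : ℤ) : ZMod 2)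

def fp (p : ℕ) : specializedCurve6.Point → ZMod 2
  | .zero => 0
  | .some x _ _ => gv p x

lemma fp_zero (p : ℕ) : fp p 0 = 0 := rfl

lemma fp_some (p : ℕ) {x y : ℚ} (h : specializedCurve6.Nonsingular x y) :
    fp p (Point.some _ _ h) = gv p x := rfl

theorem fp_add (p : ℕ) [hp : Fact p.Prime] (P Q : specializedCurve6.Point) :
    fp p (P + Q) = fp p P + fp p Q := by
  rcases P with _ | @⟨x₁, y₁, h₁⟩
  · rw [show (Point.zero : specializedCurve6.Point) = 0 from rfl, zero_add, fp_zero, zero_add]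
  rcases Q with _ | @⟨x₂, y₂, h₂⟩
  · rw [show (Point.zero : specializedCurve6.Point) = 0 from rfl, add_zero, fp_zero, add_zero]
  by_cases hz : x₁ = x₂ ∧ y₁ = specializedCurve6.negY x₂ y₂
  · rw [WeierstrassCurve.Affine.Point.add_of_Y_eq hz.1 hz.2, fp_zero, fp_some, fp_some]
    obtain ⟨rfl, -⟩ := hz
    generalize gv p x₁ = a
    revert a; decide
  · have hxy : x₁ = x₂ → y₁ ≠ specializedCurve6.negY x₂ y₂ := fun hx hy => hz ⟨hx, hy⟩
    rw [WeierstrassCurve.Affine.Point.add_some (fun h => hxy h.1 h.2), fp_some, fp_some, fp_some]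
    obtain ⟨v2, v3⟩ := vieta h₁.1 h₂.1 hxy
    set L := specializedCurve6.slope x₁ x₂ y₁ y₂ with hL
    set x₃ := specializedCurve6.addX x₁ x₂ L with hx₃def
    by_cases hx1 : x₁ = 0
    · subst hx1
      have hy1 : y₁ = 0 := y_eq_zero h₁.1
      subst hy1
      have hx2 : x₂ ≠ 0 := by
        intro hx2
        subst hx2
        exact hxy rfl (by rw [negY_eq, y_eq_zero h₂.1]; norm_num)
      have key : x₂ * x₃ = 836402720 := by linear_combination v2
      have hx3 : x₃ ≠ 0 := by
        intro h; rw [h, mul_zero] at key; norm_num at key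
      have hval : padicValRat p x₂ + padicValRat p x₃ = padicValRat p 836402720 := by
        rw [← padicValRat.mul hx2 hx3, key]
      rw [gv, gv, gv, if_neg hx3, if_pos rfl, if_neg hx2]
      have := congrArg (fun z : ℤ => (z : ZMod 2)) hval
      push_cast at this
      generalize (padicValRat p x₂ : ZMod 2) = a at this ⊢
      generalize (padicValRat p x₃ : ZMod 2) = b at this ⊢
      generalize ((padicValRat p 836402720 : ℤ) : ZMod 2) = c at this ⊢
      revert this; revert a b c; decide
    · by_cases hx2 : x₂ = 0
      · subst hx2
        have hy2 : y₂ = 0 := y_eq_zero h₂.1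
        subst hy2
        have hnu : y₁ - L * x₁ = 0 := by
          have : (y₁ - L * x₁) ^ 2 = 0 := by linear_combination -v3
          exact pow_eq_zero_iff (by norm_num) |>.mp this
        have key : x₁ * x₃ = 836402720 := by linear_combination v2 - 2 * L * hnu
        have hx3 : x₃ ≠ 0 := by
          intro h; rw [h, mul_zero] at key; norm_num at key
        have hval : padicValRat p x₁ + padicValRat p x₃ = padicValRat p 836402720 := by
          rw [← padicValRat.mul hx1 hx3, key]
        rw [gv, gv, gv, if_neg hx3, if_neg hx1, if_pos rfl]
        have := congrArg (fun z : ℤ => (z : ZMod 2)) hval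
        push_cast at this
        generalize (padicValRat p x₁ : ZMod 2) = a at this ⊢
        generalize (padicValRat p x₃ : ZMod 2) = b at this ⊢
        generalize ((padicValRat p 836402720 : ℤ) : ZMod 2) = c at this ⊢
        revert this; revert a b c; decide
      · by_cases hx3 : x₃ = 0
        · have hnu : y₁ - L * x₁ = 0 := by
            have : (y₁ - L * x₁) ^ 2 = 0 := by
              rw [← v3, hx3, mul_zero]
            exact pow_eq_zero_iff (by norm_num) |>.mp this
          have key : x₁ * x₂ = 836402720 := by
            linear_combination v2 - 2 * L * hnu - (x₁ + x₂) * hx3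
          have hval : padicValRat p x₁ + padicValRat p x₂ = padicValRat p 836402720 := by
            rw [← padicValRat.mul hx1 hx2, key]
          rw [gv, gv, gv, if_pos hx3, if_neg hx1, if_neg hx2]
          have := congrArg (fun z : ℤ => (z : ZMod 2)) hval
          push_cast at this
          generalize (padicValRat p x₁ : ZMod 2) = a at this ⊢
          generalize (padicValRat p x₂ : ZMod 2) = b at this ⊢
          generalize ((padicValRat p 836402720 : ℤ) : ZMod 2) = c at this ⊢
          revert this; revert a b c; decide
        · have hnu : y₁ - L * x₁ ≠ 0 := by
            intro h
            rw [h] at v3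
            have := mul_ne_zero (mul_ne_zero hx1 hx2) hx3
            rw [v3] at this
            norm_num at this
          have hval : padicValRat p x₁ + padicValRat p x₂ + padicValRat p x₃ =
              2 * padicValRat p (y₁ - L * x₁) := by
            rw [← padicValRat.mul hx1 hx2, ← padicValRat.mul (mul_ne_zero hx1 hx2) hx3, v3,
              padicValRat.pow]
            push_cast
            ring
          rw [gv, gv, gv, if_neg hx3, if_neg hx1, if_neg hx2]
          have := congrArg (fun z : ℤ => (z : ZMod 2)) hval
          push_cast at this
          generalize (padicValRat p x₁ : ZMod 2) = a at this ⊢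
          generalize (padicValRat p x₂ : ZMod 2) = b at this ⊢
          generalize (padicValRat p x₃ : ZMod 2) = c at this ⊢
          generalize (padicValRat p (y₁ - L * x₁) : ZMod 2) = d at this
          revert this; revert a b c d; decide

instance fact17 : Fact (Nat.Prime 17) := ⟨by norm_num⟩

lemma padic_val_calc (p : ℕ) [hp : Fact p.Prime] (k : ℕ) (a : ℤ) (ha : ¬ (p : ℤ) ∣ a) :
    padicValRat p ((p : ℚ) ^ k * (a : ℚ)) = k := by
  have ha0 : (a : ℚ) ≠ 0 := by
    simp only [ne_eq, Int.cast_eq_zero]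
    rintro rfl; exact ha (dvd_zero _)
  have hp0 : (p : ℚ) ≠ 0 := Nat.cast_ne_zero.mpr hp.out.ne_zero
  rw [padicValRat.mul (pow_ne_zero _ hp0) ha0, padicValRat.pow,
    padicValRat.self hp.out.one_lt, padicValRat.of_int, padicValInt.eq_zero_of_not_dvd ha]
  ring

lemma gv_eq (p : ℕ) [Fact p.Prime] (x : ℚ) (hx : x ≠ 0) (k : ℕ) (a : ℤ) (ha : ¬ (p : ℤ) ∣ a)
    (hxe : x = (p : ℚ) ^ k * (a : ℚ)) : gv p x = (k : ZMod 2) := by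
  rw [gv, if_neg hx, hxe, padic_val_calc p k a ha]
  push_cast
  rfl

lemma vb2 : padicValRat 2 (836402720 : ℚ) = 5 := by
  have h : (836402720 : ℚ) = ((2 : ℕ) : ℚ) ^ 5 * ((26137585 : ℤ) : ℚ) := by norm_num
  rw [h, padic_val_calc 2 5 26137585 (by norm_num)]
  norm_num

lemma gv2zero : gv 2 0 = 1 := by
  rw [gv, if_pos rfl, vb2]
  rfl

lemma b_not_sq (q : ℚ) : q ^ 2 ≠ 836402720 := by
  intro h
  have hq : q ≠ 0 := by rintro rfl; norm_num at h
  have h2 : padicValRat 2 (q ^ 2) = 2 * padicValRat 2 q := by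
    rw [padicValRat.pow]; push_cast; ring
  rw [h, vb2] at h2
  omega

lemma two_torsion {x y : ℚ} (h : specializedCurve6.Nonsingular x y)
    (hsum : Point.some _ _ h + Point.some _ _ h = (0 : specializedCurve6.Point)) :
    x = 0 ∨ x = -20164 ∨ x = -41480 := by
  have hy : y = specializedCurve6.negY x y := by
    by_contra hy
    rw [WeierstrassCurve.Affine.Point.add_self_of_Y_ne hy] at hsum
    exact WeierstrassCurve.Affine.Point.some_ne_zero _ hsum
  rw [negY_eq] at hy
  have hy0 : y = 0 := by linarith
  have he := (eqn_iff x y).mp h.1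
  rw [hy0] at he
  have hfac : x * (x + 20164) * (x + 41480) = 0 := by linear_combination -he
  rcases mul_eq_zero.mp hfac with h' | h'
  · rcases mul_eq_zero.mp h' with h'' | h''
    · exact Or.inl h''
    · exact Or.inr (Or.inl (by linarith))
  · exact Or.inr (Or.inr (by linarith))

def xc : specializedCurve6.Point → Option ℚ
  | .zero => none
  | .some x _ _ => some x

lemma no_double_to_torsion {x4 y4 x2 y2 : ℚ} (h4 : specializedCurve6.Nonsingular x4 y4)
    (h2 : specializedCurve6.Nonsingular x2 y2)
    (hsum : (Point.some _ _ h4 : specializedCurve6.Point) + Point.some _ _ h4 = Point.some _ _ h2)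
    (htor : x2 = 0 ∨ x2 = -20164 ∨ x2 = -41480) : False := by
  have hy4 : y4 ≠ specializedCurve6.negY x4 y4 := by
    intro hy
    rw [WeierstrassCurve.Affine.Point.add_self_of_Y_eq hy] at hsum
    exact WeierstrassCurve.Affine.Point.some_ne_zero h2 hsum.symm
  have hxy4 : x4 = x4 → y4 ≠ specializedCurve6.negY x4 y4 := fun _ => hy4
  rw [WeierstrassCurve.Affine.Point.add_some (fun h => hxy4 h.1 h.2)] at hsum
  have hx2eq : specializedCurve6.addX x4 x4 (specializedCurve6.slope x4 x4 y4 y4) = x2 := by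
    have h' := congrArg xc hsum
    simpa [xc] using h'
  obtain ⟨v2, v3⟩ := vieta h4.1 h4.1 hxy4
  clear hsum
  set L := specializedCurve6.slope x4 x4 y4 y4 with hLdef
  have hx4 : x4 ≠ 0 := by
    intro h0
    subst h0
    have hy0 := y_eq_zero h4.1
    apply hy4
    rw [negY_eq, hy0]; norm_num
  have hv : x4 * x4 * x2 = (y4 - L * x4) ^ 2 := by rw [← hx2eq]; exact v3
  have hx2nonneg : 0 ≤ x2 := by
    have hx2val : x2 = ((y4 - L * x4) / x4) ^ 2 := by
      field_simp
      linear_combination hv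
    rw [hx2val]; positivity
  rcases htor with h0 | h0 | h0
  · rw [h0, mul_zero] at hv
    have hnu : y4 - L * x4 = 0 := pow_eq_zero_iff (two_ne_zero) |>.mp hv.symm
    have hx3 : specializedCurve6.addX x4 x4 L = 0 := by rw [hx2eq, h0]
    have hsq : x4 ^ 2 = 836402720 := by
      linear_combination v2 - 2 * x4 * hx3 - 2 * L * hnu
    exact b_not_sq x4 hsq
  · rw [h0] at hx2nonneg; norm_num at hx2nonneg
  · rw [h0] at hx2nonneg; norm_num at hx2nonneg

end Spec6Aux

set_option maxHeartbeats 2000000 in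
/-- `G₁ = (-20740, 497760)` is a rational point of infinite order on
`y² = x³ + 61644x² + 836402720x`. -/
theorem G1_on_specializedCurve6_infinite_order :
    ∃ h : specializedCurve6.Nonsingular (-20740) 497760,
      ¬ IsOfFinAddOrder (WeierstrassCurve.Affine.Point.some _ _ h) := by
  classical
  have hP : specializedCurve6.Nonsingular (-20740) 497760 := by
    rw [WeierstrassCurve.Affine.nonsingular_iff]
    refine ⟨(Spec6Aux.eqn_iff _ _).mpr (by norm_num), Or.inr (by norm_num [specializedCurve6])⟩
  refine ⟨hP, fun hfin => ?_⟩
  set P : specializedCurve6.Point := WeierstrassCurve.Affine.Point.some _ _ hP with hPdef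
  let F2 : specializedCurve6.Point →+ ZMod 2 := AddMonoidHom.mk' (Spec6Aux.fp 2) (Spec6Aux.fp_add 2)
  let F17 : specializedCurve6.Point →+ ZMod 2 :=
    AddMonoidHom.mk' (Spec6Aux.fp 17) (Spec6Aux.fp_add 17)
  have hF2P : F2 P = 0 := by
    show Spec6Aux.fp 2 P = 0
    rw [hPdef, Spec6Aux.fp_some,
      Spec6Aux.gv_eq 2 _ (by norm_num) 2 (-5185) (by norm_num) (by norm_num)]
    rfl
  have hF17P : F17 P = 1 := by
    show Spec6Aux.fp 17 P = 1
    rw [hPdef, Spec6Aux.fp_some,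
      Spec6Aux.gv_eq 17 _ (by norm_num) 1 (-1220) (by norm_num) (by norm_num)]
    rfl
  set n := addOrderOf P with hndef
  have hnpos : 0 < n := hfin.addOrderOf_pos
  have hnP : n • P = 0 := addOrderOf_nsmul_eq_zero P
  have hneven : (n : ZMod 2) = 0 := by
    have h := map_nsmul F17 n P
    rw [hnP, map_zero, hF17P, nsmul_eq_mul, mul_one] at h
    exact h.symm
  obtain ⟨k, hk⟩ : 2 ∣ n := (ZMod.natCast_eq_zero_iff n 2).mp hneven
  have hkpos : 0 < k := by omega
  have hP2ne : k • P ≠ 0 := by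
    intro h0
    have hdvd := addOrderOf_dvd_of_nsmul_eq_zero h0
    rw [← hndef] at hdvd
    have := Nat.le_of_dvd hkpos hdvd
    omega
  have hP2tor : k • P + k • P = (0 : specializedCurve6.Point) := by
    rw [← add_nsmul, show k + k = n from by omega, hnP]
  rcases hQ : k • P with _ | @⟨x2, y2, h2⟩
  · exact hP2ne hQ
  rw [hQ] at hP2tor
  have hx2cases := Spec6Aux.two_torsion h2 hP2tor
  rcases Nat.even_or_odd k with ⟨m, hm⟩ | hodd
  · -- k even: there is a point of order 4
    have hmpos : 0 < m := by omega
    have hm2 : m • P + m • P = WeierstrassCurve.Affine.Point.some _ _ h2 := by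
      rw [← add_nsmul, ← hm, hQ]
    rcases hQ4 : m • P with _ | @⟨x4, y4, h4⟩
    · rw [hQ4] at hm2
      rw [show ((WeierstrassCurve.Affine.Point.zero : specializedCurve6.Point) = 0) from rfl,
        add_zero] at hm2
      exact WeierstrassCurve.Affine.Point.some_ne_zero h2 hm2.symm
    rw [hQ4] at hm2
    exact Spec6Aux.no_double_to_torsion h4 h2 hm2 hx2cases
  · -- k odd
    have hk1 : (k : ZMod 2) = 1 := by
      rw [← ZMod.natCast_mod k 2, Nat.odd_iff.mp hodd, Nat.cast_one]
    have hf2 : Spec6Aux.fp 2 (k • P) = 0 := by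
      show F2 (k • P) = 0
      rw [map_nsmul, hF2P, nsmul_eq_mul, mul_zero]
    have hf17 : Spec6Aux.fp 17 (k • P) = 1 := by
      show F17 (k • P) = 1
      rw [map_nsmul, hF17P, nsmul_eq_mul, mul_one, hk1]
    rw [hQ, Spec6Aux.fp_some] at hf2 hf17
    rcases hx2cases with h0 | h0 | h0
    · rw [h0, Spec6Aux.gv2zero] at hf2
      exact absurd hf2 (by decide)
    · rw [h0, Spec6Aux.gv_eq 17 _ (by norm_num) 0 (-20164) (by norm_num) (by norm_num)] at hf17
      exact absurd hf17 (by decide)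
    · rw [h0, Spec6Aux.gv_eq 2 _ (by norm_num) 3 (-5185) (by norm_num) (by norm_num)] at hf2
      exact absurd hf2 (by decide)
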